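/- For every integer d > 0, the index of the subgroup B·K_d in K equals (q+1)·q^{d−1}. -/

import Mathlib

open Matrix
open scoped Pointwise

noncomputable section

/-- Ambient data for the paper: `E` is the unramified quadratic extension `F(√ε)` of a
nonarchimedean local field `F` of odd residual characteristic.  The field `F` is realized
as the fixed field of the nontrivial `F`-automorphism `σ` of `E`; `ν` is the discrete
valuation of `E` (extending the valuation of `F` normalized by `ν ϖ = 1` at a uniformizer
`ϖ` of `F`, and still surjecting onto `ℤ` since `E/F` is unramified); `q` is the (odd)
cardinality of the residue field of `F` (so `q²` is that of `E`); `ε ∈ O_F^×` is a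
non-square unit and `sqε = √ε` generates `E` over `F`.  The standard facts about the
norm map and squares are included as fields. -/
structure Setting (E : Type*) [Field E] where
  /-- the nontrivial `F`-automorphism of `E`, written `x̄ = σ x` -/
  σ : E →+* E
  σσ : ∀ x, σ (σ x) = x
  σ_ne_id : σ ≠ RingHom.id E
  /-- the valuation (only its values at nonzero elements matter) -/
  ν : E → ℤ
  ν_mul : ∀ {x y : E}, x ≠ 0 → y ≠ 0 → ν (x * y) = ν x + ν y
  ν_add : ∀ {x y : E}, x ≠ 0 → y ≠ 0 → x + y ≠ 0 → min (ν x) (ν y) ≤ ν (x + y)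
  ν_σ : ∀ x, ν (σ x) = ν x
  ν_surj : ∀ n : ℤ, ∃ x : E, x ≠ 0 ∧ ν x = n
  /-- a uniformizer of `F` -/
  ϖ : E
  ϖ_ne_zero : ϖ ≠ 0
  ϖ_fixed : σ ϖ = ϖ
  ν_ϖ : ν ϖ = 1
  /-- the residual cardinality of `F` -/
  q : ℕ
  q_odd : Odd q
  one_lt_q : 1 < q
  /-- a non-square unit of `O_F` -/
  ε : E
  ε_fixed : σ ε = ε
  ε_ne_zero : ε ≠ 0
  ν_ε : ν ε = 0
  ε_nonsquare : ¬ ∃ f : E, σ f = f ∧ f * f = ε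
  /-- a square root `√ε ∈ E` of `ε` -/
  sqε : E
  sqε_sq : sqε * sqε = ε
  sqε_conj : σ sqε = -sqε
  /-- `E = F(√ε)` -/
  generates : ∀ x : E, ∃ a b : E, σ a = a ∧ σ b = b ∧ x = a + b * sqε
  /-- the norm maps `O_E^×` onto `O_F^×` -/
  norm_surj_units : ∀ y : E, σ y = y → y ≠ 0 → ν y = 0 →
    ∃ x : E, x ≠ 0 ∧ ν x = 0 ∧ x * σ x = y
  /-- the norm maps `1 + p_E^d` onto `1 + p_F^d` for every `d ≥ 1` -/
  norm_surj_one_add : ∀ d : ℤ, 1 ≤ d → ∀ y : E, σ y = y → (y - 1 = 0 ∨ d ≤ ν (y - 1)) →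
    ∃ x : E, (x - 1 = 0 ∨ d ≤ ν (x - 1)) ∧ x * σ x = y
  /-- the residue field of `F` has `q` elements -/
  residue_F : ∃ R : Finset E, R.card = q ∧ (∀ r ∈ R, σ r = r ∧ (r = 0 ∨ 0 ≤ ν r)) ∧
    ∀ x : E, σ x = x → (x = 0 ∨ 0 ≤ ν x) →
      ∃! r, r ∈ R ∧ (x - r = 0 ∨ 1 ≤ ν (x - r))
  /-- the residue field of `E` has `q²` elements -/
  residue_E : ∃ R : Finset E, R.card = q ^ 2 ∧ (∀ r ∈ R, r = 0 ∨ 0 ≤ ν r) ∧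
    ∀ x : E, (x = 0 ∨ 0 ≤ ν x) →
      ∃! r, r ∈ R ∧ (x - r = 0 ∨ 1 ≤ ν (x - r))
  /-- Hensel: a unit of `O_E` that is a square modulo `p_E` is a square (residue char. odd) -/
  hensel_sq : ∀ u w : E, u ≠ 0 → ν u = 0 → w ≠ 0 → ν w = 0 →
    (w * w - u = 0 ∨ 1 ≤ ν (w * w - u)) → ∃ v : E, v * v = u

namespace Setting

variable {E : Type*} [Field E] (S : Setting E)

/-- `x` lies in the ring of integers `O_E`. -/
def inOE (x : E) : Prop := x = 0 ∨ 0 ≤ S.ν x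

/-- `x` lies in the (fractional, if `d ≤ 0`) ideal `p_E^d`. -/
def inpE (d : ℤ) (x : E) : Prop := x = 0 ∨ d ≤ S.ν x

/-- `x` is a unit of `O_E`. -/
def unitOE (x : E) : Prop := x ≠ 0 ∧ S.ν x = 0

/-- `x` lies in the subfield `F` (the fixed field of `σ`). -/
def inF (x : E) : Prop := S.σ x = x

/-- `x` is a unit of `O_F`. -/
def unitOF (x : E) : Prop := S.σ x = x ∧ x ≠ 0 ∧ S.ν x = 0

/-- `x` lies in `E¹`, i.e. has norm one. -/
def normOne (x : E) : Prop := x * S.σ x = 1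

/-- `x ∈ √ε·F`. -/
def inSqεF (x : E) : Prop := ∃ f : E, S.σ f = f ∧ x = S.sqε * f

/-- Entrywise application of `σ` to a matrix, `ḡ`. -/
def mbar (g : Matrix (Fin 2) (Fin 2) E) : Matrix (Fin 2) (Fin 2) E :=
  Matrix.of fun i j => S.σ (g i j)

/-- The antidiagonal matrix `w = [[0,1],[1,0]]` defining the hermitian form. -/
def wmat (_S : Setting E) : Matrix (Fin 2) (Fin 2) E := !![0, 1; 1, 0]

/-- Membership in `G = U(1,1)(F) = {g : ḡᵀ·w·g = w}`. -/
def inG (g : Matrix (Fin 2) (Fin 2) E) : Prop :=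
  (S.mbar g)ᵀ * S.wmat * g = S.wmat

/-- `G = U(1,1)(F)`, as a set of 2×2 matrices over `E`. -/
def Gset : Set (Matrix (Fin 2) (Fin 2) E) := {g | S.inG g}

/-- `G_der = SU(1,1)(F) = {g ∈ G : det g = 1}`. -/
def Gder : Set (Matrix (Fin 2) (Fin 2) E) := {g | S.inG g ∧ g.det = 1}

/-- The standard maximal compact subgroup `K` of `G` (entries in `O_E`). -/
def Kset : Set (Matrix (Fin 2) (Fin 2) E) := {g | S.inG g ∧ ∀ i j, S.inOE (g i j)}

/-- The congruence subgroup `K_d = {k ∈ K : k − 1 ∈ p_E^d·M₂(O_E)}`. -/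
def Kfil (d : ℤ) : Set (Matrix (Fin 2) (Fin 2) E) :=
  {g | g ∈ S.Kset ∧ ∀ i j, S.inpE d ((g - 1) i j)}

/-- The subgroup `B` of upper triangular matrices in `K`. -/
def Bset : Set (Matrix (Fin 2) (Fin 2) E) := {g | g ∈ S.Kset ∧ g 1 0 = 0}

/-- The subgroup `B^op` of lower triangular matrices in `K`. -/
def Bop : Set (Matrix (Fin 2) (Fin 2) E) := {g | g ∈ S.Kset ∧ g 0 1 = 0}

/-- The center `Z = {z·I : z ∈ E¹}` of `G`. -/
def Zset : Set (Matrix (Fin 2) (Fin 2) E) :=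
  {g | ∃ z : E, S.normOne z ∧ g = z • (1 : Matrix (Fin 2) (Fin 2) E)}

/-- The matrix `α^t = diag(ϖ^{−t}, ϖ^t)`. -/
def αmat (t : ℕ) : Matrix (Fin 2) (Fin 2) E := !![(S.ϖ ^ t)⁻¹, 0; 0, S.ϖ ^ t]

/-- The matrix `η = diag(1, ϖ)` (it normalizes `G`). -/
def ηmat : Matrix (Fin 2) (Fin 2) E := !![1, 0; 0, S.ϖ]

/-- The matrix `η⁻¹ = diag(1, ϖ⁻¹)`. -/
def ηinv : Matrix (Fin 2) (Fin 2) E := !![1, 0; 0, S.ϖ⁻¹]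

/-- The torus `T_{γ₁,γ₂} = {[[a,bγ₁],[bγ₂,a]] : a·ā + b·b̄·γ₁γ₂ = 1, ā·b ∈ √ε·F}`. -/
def Tset (γ₁ γ₂ : E) : Set (Matrix (Fin 2) (Fin 2) E) :=
  {g | ∃ a b : E, g = !![a, b * γ₁; b * γ₂, a] ∧
    a * S.σ a + b * S.σ b * (γ₁ * γ₂) = 1 ∧ S.inSqεF (S.σ a * b)}

/-- The Moy–Prasad filtration subgroup `G_{y,r}` of `G` (for `r > 0`). -/
def Gfil (y r : ℚ) : Set (Matrix (Fin 2) (Fin 2) E) :=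
  {g | S.inG g ∧ S.inpE ⌈r⌉ (g 0 0 - 1) ∧ S.inpE ⌈r⌉ (g 1 1 - 1) ∧
    S.inpE ⌈r - y⌉ (g 0 1) ∧ S.inpE ⌈r + y⌉ (g 1 0)}

/-- `G_{y,0+} = ⋃_{r>0} G_{y,r}`. -/
def Gfil0plus (y : ℚ) : Set (Matrix (Fin 2) (Fin 2) E) :=
  {g | ∃ r : ℚ, 0 < r ∧ g ∈ S.Gfil y r}

end Setting


namespace StatementTen

open Setting

variable {E : Type*} [Field E] (S : Setting E)

lemma nu_one : S.ν 1 = 0 := by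
  have h := S.ν_mul (x := 1) (y := 1) one_ne_zero one_ne_zero
  simpa using h.symm

lemma nu_neg_one : S.ν (-1) = 0 := by
  have h := S.ν_mul (x := (-1:E)) (y := -1) (by simp) (by simp)
  simp only [neg_mul_neg, one_mul, nu_one] at h
  omega

lemma nu_neg {x : E} (hx : x ≠ 0) : S.ν (-x) = S.ν x := by
  have h := S.ν_mul (x := (-1:E)) (y := x) (by simp) hx
  rw [neg_one_mul] at h
  rw [h, nu_neg_one]; omega

lemma nu_inv {x : E} (hx : x ≠ 0) : S.ν x⁻¹ = - S.ν x := by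
  have h := S.ν_mul (x := x) (y := x⁻¹) hx (inv_ne_zero hx)
  rw [mul_inv_cancel₀ hx, nu_one] at h
  omega

lemma sqε_ne_zero : S.sqε ≠ 0 := by
  intro h
  apply S.ε_ne_zero
  rw [← S.sqε_sq, h, mul_zero]

lemma nu_sqε : S.ν S.sqε = 0 := by
  have h := S.ν_mul (x := S.sqε) (y := S.sqε) (sqε_ne_zero S) (sqε_ne_zero S)
  rw [S.sqε_sq, S.ν_ε] at h
  omega

lemma inpE_zero (d : ℤ) : S.inpE d 0 := Or.inl rfl

lemma inpE_neg {d : ℤ} {x : E} (h : S.inpE d x) : S.inpE d (-x) := by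
  rcases h with h | h
  · simp [h, inpE_zero]
  · rcases eq_or_ne x 0 with rfl | hx
    · simp [inpE_zero]
    · exact Or.inr (by rw [nu_neg S hx]; exact h)

lemma inpE_add {d : ℤ} {x y : E} (hx : S.inpE d x) (hy : S.inpE d y) :
    S.inpE d (x + y) := by
  rcases hx with rfl | hx
  · simpa using hy
  rcases hy with rfl | hy
  · rw [add_zero]; exact Or.inr hx
  rcases eq_or_ne x 0 with rfl | hx0
  · rw [zero_add]; exact Or.inr hy
  rcases eq_or_ne y 0 with rfl | hy0
  · rw [add_zero]; exact Or.inr hx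
  rcases eq_or_ne (x + y) 0 with h0 | h0
  · exact Or.inl h0
  · exact Or.inr (le_trans (le_min hx hy) (S.ν_add hx0 hy0 h0))

lemma inpE_sub {d : ℤ} {x y : E} (hx : S.inpE d x) (hy : S.inpE d y) :
    S.inpE d (x - y) := by
  rw [sub_eq_add_neg]; exact inpE_add S hx (inpE_neg S hy)

lemma inpE_mul {a b : ℤ} {x y : E} (hx : S.inpE a x) (hy : S.inpE b y) :
    S.inpE (a + b) (x * y) := by
  rcases hx with rfl | hx
  · simp [inpE_zero]
  rcases hy with rfl | hy
  · simp [inpE_zero]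
  rcases eq_or_ne x 0 with rfl | hx0
  · simp [inpE_zero]
  rcases eq_or_ne y 0 with rfl | hy0
  · simp [inpE_zero]
  exact Or.inr (by rw [S.ν_mul hx0 hy0]; omega)

lemma inpE_mono {a b : ℤ} (hab : a ≤ b) {x : E} (h : S.inpE b x) : S.inpE a x := by
  rcases h with rfl | h
  · exact inpE_zero S a
  · exact Or.inr (le_trans hab h)

lemma inOE_iff {x : E} : S.inOE x ↔ S.inpE 0 x := Iff.rfl

lemma inOE_mul {x y : E} (hx : S.inOE x) (hy : S.inOE y) : S.inOE (x * y) := by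
  rw [inOE_iff] at *
  simpa using inpE_mul S hx hy

lemma inpE_mul_OE {d : ℤ} {x y : E} (hx : S.inpE d x) (hy : S.inOE y) :
    S.inpE d (x * y) := by
  rw [inOE_iff] at hy
  simpa using inpE_mul S hx hy

lemma inOE_one : S.inOE (1:E) := Or.inr (by rw [nu_one])

lemma inOE_zero : S.inOE (0:E) := Or.inl rfl

-- a unit criterion
lemma unit_of_not_inpE {x : E} (hx : S.inOE x) (h : ¬ S.inpE 1 x) :
    x ≠ 0 ∧ S.ν x = 0 := by
  rcases hx with rfl | hx
  · exact absurd (inpE_zero S 1) h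
  rcases eq_or_ne x 0 with rfl | hx0
  · exact absurd (inpE_zero S 1) h
  refine ⟨hx0, ?_⟩
  by_contra hne
  exact h (Or.inr (by omega))

lemma not_inpE_one_of_unit {x : E} (hx0 : x ≠ 0) (hx : S.ν x = 0) {d : ℤ}
    (hd : 1 ≤ d) : ¬ S.inpE d x := by
  rintro (rfl | h)
  · exact hx0 rfl
  · omega

lemma nu_ϖ_pow (n : ℕ) : S.ϖ ^ n ≠ 0 ∧ S.ν (S.ϖ ^ n) = n := by
  induction n with
  | zero => exact ⟨by simpa using (one_ne_zero : (1:E) ≠ 0), by simpa using nu_one S⟩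
  | succ k ih =>
    refine ⟨pow_ne_zero _ S.ϖ_ne_zero, ?_⟩
    rw [pow_succ, S.ν_mul ih.1 S.ϖ_ne_zero, ih.2, S.ν_ϖ]
    push_cast; ring

lemma inpE_ϖ_mul {n : ℤ} {y : E} (h : S.inpE n y) : S.inpE (n+1) (S.ϖ * y) := by
  have := inpE_mul S (Or.inr (le_of_eq S.ν_ϖ.symm) : S.inpE 1 S.ϖ) h
  rwa [add_comm] at this

lemma inpE_div_ϖ {n : ℤ} {y : E} (h : S.inpE (n+1) (S.ϖ * y)) : S.inpE n y := by
  rcases eq_or_ne y 0 with rfl | hy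
  · exact inpE_zero S n
  rcases h with h | h
  · exact absurd h (mul_ne_zero S.ϖ_ne_zero hy)
  · rw [S.ν_mul S.ϖ_ne_zero hy, S.ν_ϖ] at h
    exact Or.inr (by omega)

lemma σ_fixed_sub {x y : E} (hx : S.σ x = x) (hy : S.σ y = y) : S.σ (x - y) = x - y := by
  rw [_root_.map_sub, hx, hy]

lemma σ_fixed_div {x y : E} (hx : S.σ x = x) (hy : S.σ y = y) : S.σ (x / y) = x / y := by
  rw [div_eq_mul_inv, _root_.map_mul, map_inv₀, hx, hy]

/-- trace-zero elements lie in `sqε·F` -/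
lemma trace_zero_decomp {x : E} (hx : S.σ x = -x) :
    S.σ (x / S.sqε) = x / S.sqε ∧ x = S.sqε * (x / S.sqε) := by
  constructor
  · rw [div_eq_mul_inv, _root_.map_mul, map_inv₀, hx, S.sqε_conj]
    rw [inv_neg, mul_neg, neg_mul, neg_neg]
  · rw [mul_div_cancel₀ _ (sqε_ne_zero S)]

section Digits

variable (RF : Finset E)
  (hmem : ∀ r ∈ RF, S.σ r = r ∧ S.inOE r)
  (huniq : ∀ x : E, S.σ x = x → S.inOE x →
      ∃! r, r ∈ RF ∧ S.inpE 1 (x - r))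

include hmem huniq in
lemma res_eq {r r' : E} (hr : r ∈ RF) (hr' : r' ∈ RF) (h : S.inpE 1 (r - r')) :
    r = r' := by
  obtain ⟨s, _, hs2⟩ := huniq r (hmem r hr).1 (hmem r hr).2
  have h1 : r = s := hs2 r ⟨hr, by simpa using inpE_zero S 1⟩
  have h2 : r' = s := hs2 r' ⟨hr', h⟩
  rw [h1, h2]

include hmem huniq in
lemma digits_exist (n : ℕ) (f : E) (hf : S.σ f = f) (hfO : S.inOE f) :
    ∃ c : Fin n → E, (∀ i, c i ∈ RF) ∧
      S.inpE n (f - ∑ i : Fin n, c i * S.ϖ ^ (i:ℕ)) := by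
  induction n generalizing f with
  | zero =>
    exact ⟨fun i => i.elim0, fun i => i.elim0, by simpa [Setting.inpE, Setting.inOE] using hfO⟩
  | succ m ih =>
    obtain ⟨r, ⟨hrRF, hr⟩, _⟩ := huniq f hf hfO
    set f' : E := (f - r) / S.ϖ with hf'def
    have hf'fix : S.σ f' = f' := σ_fixed_div S (σ_fixed_sub S hf (hmem r hrRF).1) S.ϖ_fixed
    have hfr : f - r = S.ϖ * f' := by
      rw [hf'def, mul_div_cancel₀ _ S.ϖ_ne_zero]
    have hf'O : S.inOE f' := by
      have : S.inpE (0 + 1) (S.ϖ * f') := by rw [← hfr]; simpa using hr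
      exact inpE_div_ϖ S this
    obtain ⟨c, hcRF, hc⟩ := ih f' hf'fix hf'O
    refine ⟨Fin.cons r c, ?_, ?_⟩
    · intro i
      refine Fin.cases ?_ ?_ i
      · simpa using hrRF
      · intro j; simpa using hcRF j
    · have hsum : ∑ i : Fin (m+1), (Fin.cons r c : Fin (m+1) → E) i * S.ϖ ^ (i:ℕ)
          = r + S.ϖ * ∑ i : Fin m, c i * S.ϖ ^ (i:ℕ) := by
        rw [Fin.sum_univ_succ, Finset.mul_sum]
        congr 1
        · simp
        · refine Finset.sum_congr rfl fun i _ => ?_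
          rw [Fin.cons_succ, Fin.val_succ, pow_succ]
          ring
      rw [hsum]
      have : f - (r + S.ϖ * ∑ i : Fin m, c i * S.ϖ ^ (i:ℕ))
          = S.ϖ * (f' - ∑ i : Fin m, c i * S.ϖ ^ (i:ℕ)) := by
        rw [mul_sub, ← hfr]; ring
      rw [this]
      have := inpE_ϖ_mul S hc
      push_cast
      push_cast at this
      exact this

include hmem huniq in
lemma digits_unique (n : ℕ) (c c' : Fin n → E) (hc : ∀ i, c i ∈ RF)
    (hc' : ∀ i, c' i ∈ RF)
    (h : S.inpE n (∑ i : Fin n, c i * S.ϖ ^ (i:ℕ) - ∑ i : Fin n, c' i * S.ϖ ^ (i:ℕ))) :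
    c = c' := by
  induction n with
  | zero => funext i; exact i.elim0
  | succ m ih =>
    have hsum : ∀ b : Fin (m+1) → E, ∑ i : Fin (m+1), b i * S.ϖ ^ (i:ℕ)
        = b 0 + S.ϖ * ∑ i : Fin m, b i.succ * S.ϖ ^ (i:ℕ) := by
      intro b
      rw [Fin.sum_univ_succ, Finset.mul_sum]
      congr 1
      · simp
      · refine Finset.sum_congr rfl fun i _ => ?_
        rw [Fin.val_succ, pow_succ]
        ring
    rw [hsum c, hsum c'] at h
    set A : E := ∑ i : Fin m, c i.succ * S.ϖ ^ (i:ℕ) with hA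
    set A' : E := ∑ i : Fin m, c' i.succ * S.ϖ ^ (i:ℕ) with hA'
    have hrearr : c 0 + S.ϖ * A - (c' 0 + S.ϖ * A') = (c 0 - c' 0) + S.ϖ * (A - A') := by
      ring
    rw [hrearr] at h
    have hAO : ∀ (b : Fin m → E), (∀ i, b i ∈ RF) →
        S.inOE (∑ i : Fin m, b i * S.ϖ ^ (i:ℕ)) := by
      intro b hb
      rw [inOE_iff]
      refine Finset.sum_induction _ _ (fun x y hx hy => inpE_add S hx hy)
        (inpE_zero S 0) ?_
      intro i _
      exact inOE_mul S (hmem _ (hb i)).2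
        (Or.inr (by rw [(nu_ϖ_pow S _).2]; exact Int.natCast_nonneg _))
    have hdiff : S.inpE 1 (S.ϖ * (A - A')) := by
      have : S.inpE 0 (A - A') :=
        inpE_sub S (hAO _ (fun i => hc i.succ)) (hAO _ (fun i => hc' i.succ))
      simpa using inpE_ϖ_mul S this
    have h0 : S.inpE 1 (c 0 - c' 0) := by
      have : c 0 - c' 0 = ((c 0 - c' 0) + S.ϖ * (A - A')) - S.ϖ * (A - A') := by ring
      rw [this]
      exact inpE_sub S (inpE_mono S (by push_cast; omega) h) hdiff
    have he0 : c 0 = c' 0 := res_eq S RF hmem huniq (hc 0) (hc' 0) h0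
    have hrest : S.inpE m (A - A') := by
      apply inpE_div_ϖ S
      have : S.ϖ * (A - A') = (c 0 - c' 0) + S.ϖ * (A - A') := by
        rw [he0]; ring
      rw [this]
      push_cast
      push_cast at h
      exact h
    have := ih (fun i => c i.succ) (fun i => c' i.succ)
      (fun i => hc i.succ) (fun i => hc' i.succ) hrest
    funext i
    refine Fin.cases ?_ ?_ i
    · exact he0
    · intro j; exact congrFun this j

end Digits

section Mat

abbrev M2 (E : Type*) [Field E] := Matrix (Fin 2) (Fin 2) E

lemma mbar_eq_map (g : M2 E) : S.mbar g = g.map S.σ := rfl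

lemma mbar_mul (g h : M2 E) : S.mbar (g * h) = S.mbar g * S.mbar h := by
  simp only [mbar_eq_map]
  exact Matrix.map_mul

lemma wmat_mul_wmat : S.wmat * S.wmat = 1 := by
  simp [Setting.wmat]
  ext i j
  fin_cases i <;> fin_cases j <;>
    simp [Matrix.mul_apply, Fin.sum_univ_two, Matrix.one_apply]

/-- the four scalar equations of unitarity -/
lemma inG_iff (g : M2 E) : S.inG g ↔
    (S.σ (g 1 0) * g 0 0 + S.σ (g 0 0) * g 1 0 = 0) ∧
    (S.σ (g 1 0) * g 0 1 + S.σ (g 0 0) * g 1 1 = 1) ∧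
    (S.σ (g 1 1) * g 0 0 + S.σ (g 0 1) * g 1 0 = 1) ∧
    (S.σ (g 1 1) * g 0 1 + S.σ (g 0 1) * g 1 1 = 0) := by
  unfold Setting.inG
  rw [← Matrix.ext_iff]
  constructor
  · intro h
    refine ⟨?_, ?_, ?_, ?_⟩
    · have := h 0 0
      simpa [Setting.wmat, Setting.mbar, Matrix.mul_apply, Fin.sum_univ_two] using this
    · have := h 0 1
      simpa [Setting.wmat, Setting.mbar, Matrix.mul_apply, Fin.sum_univ_two] using this
    · have := h 1 0
      simpa [Setting.wmat, Setting.mbar, Matrix.mul_apply, Fin.sum_univ_two] using this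
    · have := h 1 1
      simpa [Setting.wmat, Setting.mbar, Matrix.mul_apply, Fin.sum_univ_two] using this
  · rintro ⟨h1, h2, h3, h4⟩ i j
    fin_cases i <;> fin_cases j <;>
      simpa [Setting.wmat, Setting.mbar, Matrix.mul_apply, Fin.sum_univ_two] using
        (by assumption : _)

lemma inG_mul_cancel {g m : M2 E} (hg : S.inG g) : S.inG (g * m) ↔ S.inG m := by
  unfold Setting.inG at *
  rw [mbar_mul, Matrix.transpose_mul]
  constructor
  · intro h
    have : (S.mbar m)ᵀ * ((S.mbar g)ᵀ * S.wmat * g) * m = S.wmat := by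
      calc (S.mbar m)ᵀ * ((S.mbar g)ᵀ * S.wmat * g) * m
          = (S.mbar m)ᵀ * (S.mbar g)ᵀ * S.wmat * (g * m) := by noncomm_ring
        _ = S.wmat := h
    rwa [hg] at this
  · intro h
    calc (S.mbar m)ᵀ * (S.mbar g)ᵀ * S.wmat * (g * m)
        = (S.mbar m)ᵀ * ((S.mbar g)ᵀ * S.wmat * g) * m := by noncomm_ring
      _ = (S.mbar m)ᵀ * S.wmat * m := by rw [hg]
      _ = S.wmat := h

lemma inG_mul {g m : M2 E} (hg : S.inG g) (hm : S.inG m) : S.inG (g * m) :=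
  (inG_mul_cancel S hg).2 hm

lemma det_norm_one {g : M2 E} (hg : S.inG g) :
    g.det * S.σ g.det = 1 := by
  unfold Setting.inG at hg
  have hdet := congrArg Matrix.det hg
  rw [Matrix.det_mul, Matrix.det_mul, Matrix.det_transpose] at hdet
  have hw : (S.wmat).det = -1 := by
    simp [Setting.wmat, Matrix.det_fin_two_of]
  have hmb : (S.mbar g).det = S.σ g.det := by
    rw [mbar_eq_map]
    exact (RingHom.map_det S.σ g).symm
  rw [hmb, hw] at hdet
  linear_combination -hdet

lemma det_unit {g : M2 E} (hg : S.inG g) : g.det ≠ 0 ∧ S.ν g.det = 0 := by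
  have h := det_norm_one S hg
  have hne : g.det ≠ 0 := by
    intro h0; rw [h0, zero_mul] at h; exact absurd h.symm one_ne_zero
  refine ⟨hne, ?_⟩
  have hσne : S.σ g.det ≠ 0 := by
    intro h0; rw [h0, mul_zero] at h; exact absurd h.symm one_ne_zero
  have := S.ν_mul hne hσne
  rw [h, nu_one, S.ν_σ] at this
  omega

lemma Kset_mul {g m : M2 E} (hg : g ∈ S.Kset) (hm : m ∈ S.Kset) :
    g * m ∈ S.Kset := by
  refine ⟨inG_mul S hg.1 hm.1, ?_⟩
  intro i j
  rw [Matrix.mul_apply, Fin.sum_univ_two]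
  exact inpE_add S (inOE_mul S (hg.2 i 0) (hm.2 0 j)) (inOE_mul S (hg.2 i 1) (hm.2 1 j))

/-- the explicit inverse of a unitary matrix -/
lemma inG_inv_formula {g : M2 E} (hg : S.inG g) :
    !![S.σ (g 1 1), S.σ (g 0 1); S.σ (g 1 0), S.σ (g 0 0)] * g = 1 ∧
    g * !![S.σ (g 1 1), S.σ (g 0 1); S.σ (g 1 0), S.σ (g 0 0)] = 1 := by
  rw [inG_iff] at hg
  obtain ⟨h1, h2, h3, h4⟩ := hg
  have hAg : !![S.σ (g 1 1), S.σ (g 0 1); S.σ (g 1 0), S.σ (g 0 0)] * g = 1 := by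
    ext i j
    fin_cases i <;> fin_cases j <;>
      simp [Matrix.mul_apply, Fin.sum_univ_two, Matrix.one_apply] <;>
      first
        | linear_combination h1
        | linear_combination h2
        | linear_combination h3
        | linear_combination h4
  exact ⟨hAg, mul_eq_one_comm.mp hAg⟩

end Mat

lemma σ_ne_zero {x : E} (hx : x ≠ 0) : S.σ x ≠ 0 := by
  intro h
  apply hx
  have := congrArg S.σ h
  rwa [S.σσ, map_zero] at this

lemma inpE_σ {d : ℤ} {x : E} (h : S.inpE d x) : S.inpE d (S.σ x) := by
  rcases h with rfl | h
  · rw [map_zero]; exact inpE_zero S d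
  rcases eq_or_ne x 0 with rfl | hx
  · rw [map_zero]; exact inpE_zero S d
  · exact Or.inr (by rw [S.ν_σ]; exact h)

lemma inOE_div_unit {a b : E} (ha : S.inOE a) (hb : b ≠ 0) (hbv : S.ν b = 0) :
    S.inOE (a / b) := by
  rcases ha with rfl | ha
  · simp [inOE_zero]
  rcases eq_or_ne a 0 with rfl | ha0
  · simp [inOE_zero]
  refine Or.inr ?_
  rw [div_eq_mul_inv, S.ν_mul ha0 (inv_ne_zero hb), nu_inv S hb, hbv]
  omega

section BKd

variable {d : ℤ}

lemma mem_BKd_iff (hd : 1 ≤ d) (h : M2 E) :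
    h ∈ S.Bset * S.Kfil d ↔ h ∈ S.Kset ∧ S.inpE d (h 1 0) := by
  constructor
  · rintro hmem
    rw [Set.mem_mul] at hmem
    obtain ⟨b, hb, k, hk, hbk⟩ := hmem
    have hKs : h ∈ S.Kset := by rw [← hbk]; exact Kset_mul S hb.1 hk.1
    refine ⟨hKs, ?_⟩
    have h10 : h 1 0 = b 1 1 * k 1 0 := by
      rw [← hbk, Matrix.mul_apply, Fin.sum_univ_two, hb.2, zero_mul, zero_add]
    have hk10 : S.inpE d (k 1 0) := by
      have := hk.2 1 0
      simpa [Matrix.sub_apply, Matrix.one_apply] using this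
    rw [h10, mul_comm]
    exact inpE_mul_OE S hk10 (hb.1.2 1 1)
  · rintro ⟨hK, h10d⟩
    -- h00 and h11 are units
    have hdet := det_unit S hK.1
    have hdet2 : h.det = h 0 0 * h 1 1 - h 0 1 * h 1 0 := Matrix.det_fin_two h
    have h10p : S.inpE 1 (h 1 0) := inpE_mono S hd h10d
    have hnp : ¬ S.inpE 1 (h 0 0 * h 1 1) := by
      intro hp
      have : S.inpE 1 h.det := by
        rw [hdet2]
        refine inpE_sub S hp ?_
        rw [mul_comm]
        exact inpE_mul_OE S h10p (hK.2 0 1)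
      exact not_inpE_one_of_unit S hdet.1 hdet.2 le_rfl this
    have h00u : h 0 0 ≠ 0 ∧ S.ν (h 0 0) = 0 := by
      refine unit_of_not_inpE S (hK.2 0 0) fun hp => hnp ?_
      exact inpE_mul_OE S hp (hK.2 1 1)
    have h11u : h 1 1 ≠ 0 ∧ S.ν (h 1 1) = 0 := by
      refine unit_of_not_inpE S (hK.2 1 1) fun hp => hnp ?_
      rw [mul_comm]
      exact inpE_mul_OE S hp (hK.2 0 0)
    have hσ00 : S.σ (h 0 0) ≠ 0 := σ_ne_zero S h00u.1
    -- unitarity equations of h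
    have hGh := (inG_iff S h).1 hK.1
    obtain ⟨e1, e2, e3, e4⟩ := hGh
    -- the factorization
    set y : E := h 0 1 / (S.σ (h 0 0) * h 1 1) with hy
    set b : M2 E := !![h 0 0, y; 0, (S.σ (h 0 0))⁻¹] with hbdef
    set k : M2 E := !![1 - h 0 1 * h 1 0 / (h 0 0 * h 1 1), 0;
                       S.σ (h 0 0) * h 1 0, S.σ (h 0 0) * h 1 1] with hkdef
    have hbk : b * k = h := by
      ext i j
      fin_cases i <;> fin_cases j <;>
        simp only [hbdef, hkdef, Matrix.mul_apply, Fin.sum_univ_two] <;>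
        simp [hy] <;>
        (try field_simp [h00u.1, h11u.1, hσ00]) <;>
        (try ring)
    have hσy : S.σ y = S.σ (h 0 1) / (h 0 0 * S.σ (h 1 1)) := by
      rw [hy, map_div₀, _root_.map_mul, S.σσ]
    have hGb : S.inG b := by
      rw [inG_iff]
      refine ⟨?_, ?_, ?_, ?_⟩
      · simp [hbdef]
      · simp only [hbdef]
        simp
        try rw [mul_inv_cancel₀ hσ00]
      · simp only [hbdef]
        simp
        rw [S.σσ, inv_mul_cancel₀ h00u.1]
      · simp only [hbdef]
        simp
        rw [S.σσ, hσy, hy]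
        field_simp [h00u.1, h11u.1, hσ00, σ_ne_zero S h11u.1]
        linear_combination e4
    have hbK : b ∈ S.Bset := by
      refine ⟨⟨hGb, ?_⟩, by simp [hbdef]⟩
      intro i j
      fin_cases i <;> fin_cases j <;> simp [hbdef]
      · exact hK.2 0 0
      · exact inOE_div_unit S (hK.2 0 1) (mul_ne_zero hσ00 h11u.1)
          (by rw [S.ν_mul hσ00 h11u.1, S.ν_σ, h00u.2, h11u.2]; ring)
      · exact inOE_zero S
      · exact Or.inr (by rw [nu_inv S hσ00, S.ν_σ, h00u.2]; norm_num)
    have hσ00O : S.inOE (S.σ (h 0 0)) := by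
      rw [inOE_iff] at *
      exact inpE_σ S (hK.2 0 0)
    have hkK : k ∈ S.Kset := by
      refine ⟨(inG_mul_cancel S hGb).1 (by rw [hbk]; exact hK.1), ?_⟩
      intro i j
      fin_cases i <;> fin_cases j <;> simp [hkdef]
      · refine inpE_sub S (inOE_one S) ?_
        exact inOE_div_unit S (inOE_mul S (hK.2 0 1) (hK.2 1 0))
          (mul_ne_zero h00u.1 h11u.1)
          (by rw [S.ν_mul h00u.1 h11u.1, h00u.2, h11u.2]; ring)
      · exact inOE_zero S
      · exact inOE_mul S hσ00O (hK.2 1 0)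
      · exact inOE_mul S hσ00O (hK.2 1 1)
    have hkKfil : k ∈ S.Kfil d := by
      refine ⟨hkK, ?_⟩
      intro i j
      fin_cases i <;> fin_cases j <;>
        simp only [hkdef, Matrix.sub_apply, Matrix.one_apply] <;> simp
      · have heq : h 0 1 * h 1 0 / (h 0 0 * h 1 1)
            = h 1 0 * (h 0 1 / (h 0 0 * h 1 1)) := by
          ring
        rw [heq]
        refine inpE_neg S (inpE_mul_OE S h10d ?_)
        exact inOE_div_unit S (hK.2 0 1) (mul_ne_zero h00u.1 h11u.1)
          (by rw [S.ν_mul h00u.1 h11u.1, h00u.2, h11u.2]; ring)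
      · exact inpE_zero S d
      · rw [mul_comm]
        exact inpE_mul_OE S h10d hσ00O
      · have heq : S.σ (h 0 0) * h 1 1 - 1 = -(S.σ (h 1 0) * h 0 1) := by
          linear_combination e2
        rw [heq]
        refine inpE_neg S (inpE_mul_OE S (inpE_σ S h10d) (hK.2 0 1))
    rw [Set.mem_mul]
    exact ⟨b, hbK, k, hkKfil, hbk⟩

end BKd

section GLpart

lemma inG_one : S.inG (1 : M2 E) := by
  unfold Setting.inG
  have h1 : S.mbar 1 = 1 := by
    rw [mbar_eq_map]
    exact Matrix.map_one _ (map_zero S.σ) (map_one S.σ)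
  rw [h1, Matrix.transpose_one, one_mul, mul_one]

lemma Kset_adj {g : M2 E} (hg : g ∈ S.Kset) :
    !![S.σ (g 1 1), S.σ (g 0 1); S.σ (g 1 0), S.σ (g 0 0)] ∈ S.Kset := by
  have hA := inG_inv_formula S hg.1
  refine ⟨(inG_mul_cancel S hg.1).1 (by rw [hA.2]; exact inG_one S), ?_⟩
  intro i j
  have hσO : ∀ i' j' : Fin 2, S.inOE (S.σ (g i' j')) := by
    intro i' j'
    rw [inOE_iff]
    exact inpE_σ S (hg.2 i' j')
  fin_cases i <;> fin_cases j <;> simp <;> apply hσO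

lemma val_inv_eq (u : Matrix.GeneralLinearGroup (Fin 2) E)
    (hu : (u : M2 E) ∈ S.Kset) :
    ((u⁻¹ : Matrix.GeneralLinearGroup (Fin 2) E) : M2 E) =
      !![S.σ ((u : M2 E) 1 1), S.σ ((u : M2 E) 0 1);
         S.σ ((u : M2 E) 1 0), S.σ ((u : M2 E) 0 0)] := by
  have hA := inG_inv_formula S hu.1
  exact Units.inv_eq_of_mul_eq_one_right hA.2

/-- the key coset criterion -/
lemma coset_criterion {d : ℤ} (hd : 1 ≤ d) (u v : Matrix.GeneralLinearGroup (Fin 2) E)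
    (hu : (u : M2 E) ∈ S.Kset) (hv : (v : M2 E) ∈ S.Kset) :
    ((u⁻¹ * v : Matrix.GeneralLinearGroup (Fin 2) E) : M2 E) ∈ S.Bset * S.Kfil d ↔
      S.inpE d (S.σ ((u : M2 E) 1 0) * (v : M2 E) 0 0 +
        S.σ ((u : M2 E) 0 0) * (v : M2 E) 1 0) := by
  have hval : ((u⁻¹ * v : Matrix.GeneralLinearGroup (Fin 2) E) : M2 E)
      = ((u⁻¹ : Matrix.GeneralLinearGroup (Fin 2) E) : M2 E) * (v : M2 E) :=
    Units.val_mul _ _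
  rw [hval, val_inv_eq S u hu, mem_BKd_iff S hd]
  have hKmem : !![S.σ ((u : M2 E) 1 1), S.σ ((u : M2 E) 0 1);
      S.σ ((u : M2 E) 1 0), S.σ ((u : M2 E) 0 0)] * (v : M2 E) ∈ S.Kset :=
    Kset_mul S (Kset_adj S hu) hv
  have hentry : (!![S.σ ((u : M2 E) 1 1), S.σ ((u : M2 E) 0 1);
      S.σ ((u : M2 E) 1 0), S.σ ((u : M2 E) 0 0)] * (v : M2 E)) 1 0
      = S.σ ((u : M2 E) 1 0) * (v : M2 E) 0 0 +
        S.σ ((u : M2 E) 0 0) * (v : M2 E) 1 0 := by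
    rw [Matrix.mul_apply, Fin.sum_univ_two]
    simp
  rw [hentry]
  exact ⟨fun h => h.2, fun h => ⟨hKmem, h⟩⟩

end GLpart

lemma inpE_unit_mul {d : ℤ} {x y : E} (hx : x ≠ 0) (hν : S.ν x = 0) :
    S.inpE d (x * y) ↔ S.inpE d y := by
  constructor
  · intro h
    rcases eq_or_ne y 0 with rfl | hy
    · exact inpE_zero S d
    rcases h with h | h
    · exact absurd h (mul_ne_zero hx hy)
    · rw [S.ν_mul hx hy, hν, zero_add] at h
      exact Or.inr h
  · intro h
    have := inpE_mul S (Or.inr (le_of_eq hν.symm) : S.inpE 0 x) h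
    simpa using this

section Reps

variable (RF : Finset E) (hmem : ∀ r ∈ RF, S.σ r = r ∧ S.inOE r)

include hmem in
lemma sum_OE {n : ℕ} (c : Fin n → E) (hc : ∀ i, c i ∈ RF) :
    S.inOE (∑ i : Fin n, c i * S.ϖ ^ (i:ℕ)) := by
  rw [inOE_iff]
  refine Finset.sum_induction _ _ (fun x y hx hy => inpE_add S hx hy)
    (inpE_zero S 0) ?_
  intro i _
  exact inOE_mul S (hmem _ (hc i)).2
    (Or.inr (by rw [(nu_ϖ_pow S _).2]; exact Int.natCast_nonneg _))

include hmem in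
lemma sum_fixed {n : ℕ} (c : Fin n → E) (hc : ∀ i, c i ∈ RF) :
    S.σ (∑ i : Fin n, c i * S.ϖ ^ (i:ℕ)) = ∑ i : Fin n, c i * S.ϖ ^ (i:ℕ) := by
  rw [map_sum]
  refine Finset.sum_congr rfl fun i _ => ?_
  rw [_root_.map_mul, (hmem _ (hc i)).1, map_pow, S.ϖ_fixed]

end Reps

/-- lower unipotent representative -/
def uAunit (c : E) : Matrix.GeneralLinearGroup (Fin 2) E where
  val := !![1, 0; c, 1]
  inv := !![1, 0; -c, 1]
  val_inv := by
    ext i j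
    fin_cases i <;> fin_cases j <;>
      simp [Matrix.mul_apply, Fin.sum_univ_two, Matrix.one_apply]
  inv_val := by
    ext i j
    fin_cases i <;> fin_cases j <;>
      simp [Matrix.mul_apply, Fin.sum_univ_two, Matrix.one_apply]

/-- antidiagonal-type representative -/
def uBunit (a : E) : Matrix.GeneralLinearGroup (Fin 2) E where
  val := !![a, 1; 1, 0]
  inv := !![0, 1; 1, -a]
  val_inv := by
    ext i j
    fin_cases i <;> fin_cases j <;>
      simp [Matrix.mul_apply, Fin.sum_univ_two, Matrix.one_apply]
  inv_val := by
    ext i j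
    fin_cases i <;> fin_cases j <;>
      simp [Matrix.mul_apply, Fin.sum_univ_two, Matrix.one_apply]

lemma uA_val (c : E) : ((uAunit c : Matrix.GeneralLinearGroup (Fin 2) E) : M2 E)
    = !![1, 0; c, 1] := rfl

lemma uB_val (a : E) : ((uBunit a : Matrix.GeneralLinearGroup (Fin 2) E) : M2 E)
    = !![a, 1; 1, 0] := rfl

lemma uA_mem {c : E} (hσc : S.σ c = -c) (hc : S.inOE c) :
    ((uAunit c : Matrix.GeneralLinearGroup (Fin 2) E) : M2 E) ∈ S.Kset := by
  rw [uA_val]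
  constructor
  · rw [inG_iff]
    refine ⟨?_, ?_, ?_, ?_⟩ <;> simp [hσc] <;> ring
  · intro i j
    fin_cases i <;> fin_cases j <;> simp
    · exact inOE_one S
    · exact inOE_zero S
    · exact hc
    · exact inOE_one S

lemma uB_mem {a : E} (hσa : S.σ a = -a) (ha : S.inOE a) :
    ((uBunit a : Matrix.GeneralLinearGroup (Fin 2) E) : M2 E) ∈ S.Kset := by
  rw [uB_val]
  constructor
  · rw [inG_iff]
    refine ⟨?_, ?_, ?_, ?_⟩ <;> simp [hσa] <;> ring
  · intro i j
    fin_cases i <;> fin_cases j <;> simp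
    · exact ha
    · exact inOE_one S
    · exact inOE_one S
    · exact inOE_zero S

lemma inpE_div_unit {d : ℤ} {x y : E} (hx : S.inpE d x) (hy : y ≠ 0)
    (hν : S.ν y = 0) : S.inpE d (x / y) := by
  rw [div_eq_mul_inv]
  have : S.inOE y⁻¹ := Or.inr (by rw [nu_inv S hy, hν]; norm_num)
  exact inpE_mul_OE S hx this


end StatementTen

/-- For every integer `d > 0`, the subgroup `B·K_d` has index
`(q+1)·q^{d−1}` in `K`. -/
theorem statement10 {E : Type*} [Field E] (S : Setting E) (d : ℕ) (hd : 0 < d)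
    (Ksub BKd : Subgroup (Matrix.GeneralLinearGroup (Fin 2) E))
    (hKsub : ∀ g : Matrix.GeneralLinearGroup (Fin 2) E,
      g ∈ Ksub ↔ (g : Matrix (Fin 2) (Fin 2) E) ∈ S.Kset)
    (hBKd : ∀ g : Matrix.GeneralLinearGroup (Fin 2) E,
      g ∈ BKd ↔ (g : Matrix (Fin 2) (Fin 2) E) ∈ S.Bset * S.Kfil d) :
    BKd.relIndex Ksub = (S.q + 1) * S.q ^ (d - 1) := by
  classical
  open StatementTen in
  obtain ⟨RF, hRFcard, hRFmem, hRFuniq⟩ := S.residue_F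
  have hd1 : (1:ℤ) ≤ (d:ℤ) := by exact_mod_cast hd
  -- the values of the representatives
  let valA : (Fin d → {r // r ∈ RF}) → E :=
    fun c => S.sqε * ∑ i : Fin d, (c i : E) * S.ϖ ^ (i:ℕ)
  let valB : (Fin (d-1) → {r // r ∈ RF}) → E :=
    fun c => S.sqε * (S.ϖ * ∑ i : Fin (d-1), (c i : E) * S.ϖ ^ (i:ℕ))
  have hvalAσ : ∀ c, S.σ (valA c) = -(valA c) := by
    intro c
    show S.σ (S.sqε * _) = _
    rw [_root_.map_mul, S.sqε_conj, sum_fixed S RF hRFmem _ (fun i => (c i).2)]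
    ring
  have hvalAO : ∀ c, S.inOE (valA c) := fun c =>
    inOE_mul S (Or.inr (le_of_eq (nu_sqε S).symm))
      (sum_OE S RF hRFmem _ (fun i => (c i).2))
  have hvalBσ : ∀ c, S.σ (valB c) = -(valB c) := by
    intro c
    show S.σ (S.sqε * (S.ϖ * _)) = _
    rw [_root_.map_mul, _root_.map_mul, S.sqε_conj, S.ϖ_fixed,
      sum_fixed S RF hRFmem _ (fun i => (c i).2)]
    ring
  have hvalB1 : ∀ c, S.inpE 1 (valB c) := by
    intro c
    refine (inpE_unit_mul S (sqε_ne_zero S) (nu_sqε S)).2 ?_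
    have := inpE_ϖ_mul S ((inOE_iff S).1 (sum_OE S RF hRFmem _ (fun i => (c i).2)))
    simpa using this
  have hvalBO : ∀ c, S.inOE (valB c) := fun c => inpE_mono S one_pos.le (hvalB1 c)
  -- the representatives as elements of K
  let eA : (Fin d → {r // r ∈ RF}) → ↥Ksub :=
    fun c => ⟨uAunit (valA c), (hKsub _).2 (uA_mem S (hvalAσ c) (hvalAO c))⟩
  let eB : (Fin (d-1) → {r // r ∈ RF}) → ↥Ksub :=
    fun c => ⟨uBunit (valB c), (hKsub _).2 (uB_mem S (hvalBσ c) (hvalBO c))⟩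
  let Φ : ((Fin d → {r // r ∈ RF}) ⊕ (Fin (d-1) → {r // r ∈ RF})) →
      (↥Ksub ⧸ BKd.subgroupOf Ksub) :=
    fun t => QuotientGroup.mk (Sum.elim eA eB t)
  -- the coset criterion
  have key : ∀ x y : ↥Ksub,
      (QuotientGroup.mk x : ↥Ksub ⧸ BKd.subgroupOf Ksub) = QuotientGroup.mk y ↔
        S.inpE d (S.σ (((x : Matrix.GeneralLinearGroup (Fin 2) E) :
            Matrix (Fin 2) (Fin 2) E) 1 0) *
            ((y : Matrix.GeneralLinearGroup (Fin 2) E) : Matrix (Fin 2) (Fin 2) E) 0 0 +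
          S.σ (((x : Matrix.GeneralLinearGroup (Fin 2) E) :
            Matrix (Fin 2) (Fin 2) E) 0 0) *
            ((y : Matrix.GeneralLinearGroup (Fin 2) E) : Matrix (Fin 2) (Fin 2) E) 1 0) := by
    intro x y
    rw [QuotientGroup.eq, Subgroup.mem_subgroupOf, hBKd]
    have hco : ((x⁻¹ * y : ↥Ksub) : Matrix.GeneralLinearGroup (Fin 2) E)
        = (x : Matrix.GeneralLinearGroup (Fin 2) E)⁻¹
          * (y : Matrix.GeneralLinearGroup (Fin 2) E) := by
      simp
    rw [hco]
    exact coset_criterion S hd1 _ _ ((hKsub _).1 x.2) ((hKsub _).1 y.2)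
  -- entry values of the representatives
  have heA : ∀ c, ((eA c : Matrix.GeneralLinearGroup (Fin 2) E) :
      Matrix (Fin 2) (Fin 2) E) = !![1, 0; valA c, 1] := fun c => rfl
  have heB : ∀ c, ((eB c : Matrix.GeneralLinearGroup (Fin 2) E) :
      Matrix (Fin 2) (Fin 2) E) = !![valB c, 1; 1, 0] := fun c => rfl
  -- injectivity
  have hinj : Function.Injective Φ := by
    rintro (c | c) (c' | c') h
    · have h' := (key _ _).1 h
      simp only [Sum.elim_inl, Sum.elim_inr] at h'
      rw [heA, heA] at h'
      simp only [Fin.isValue, Matrix.of_apply, Matrix.cons_val', Matrix.cons_val_zero,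
        Matrix.cons_val_one, Matrix.head_cons, Matrix.head_fin_const,
        Matrix.empty_val', Matrix.cons_val_fin_one, _root_.map_one] at h'
      rw [hvalAσ c] at h'
      have heq : -valA c * 1 + 1 * valA c'
          = S.sqε * (∑ i : Fin d, ((c' i : E)) * S.ϖ ^ (i:ℕ)
            - ∑ i : Fin d, ((c i : E)) * S.ϖ ^ (i:ℕ)) := by
        show _ = S.sqε * _
        simp only [valA]
        ring
      rw [heq, inpE_unit_mul S (sqε_ne_zero S) (nu_sqε S)] at h'
      have := digits_unique S RF hRFmem hRFuniq d (fun i => (c' i : E))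
        (fun i => (c i : E)) (fun i => (c' i).2) (fun i => (c i).2) h'
      have hcc : c = c' := by
        funext i
        exact Subtype.ext (congrFun this i).symm
      rw [hcc]
    · exfalso
      have h' := (key _ _).1 h
      simp only [Sum.elim_inl, Sum.elim_inr] at h'
      rw [heA, heB] at h'
      simp only [Fin.isValue, Matrix.of_apply, Matrix.cons_val', Matrix.cons_val_zero,
        Matrix.cons_val_one, Matrix.head_cons, Matrix.head_fin_const,
        Matrix.empty_val', Matrix.cons_val_fin_one, _root_.map_one] at h'
      rw [hvalAσ c] at h'
      have h1 : S.inpE 1 (-valA c * valB c' + 1 * 1) := inpE_mono S hd1 h'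
      have h2 : S.inpE 1 (valA c * valB c') := by
        rw [mul_comm]
        exact inpE_mul_OE S (hvalB1 c') (hvalAO c)
      have h3 : S.inpE 1 (1:E) := by
        have := inpE_add S h1 h2
        simpa using this
      exact not_inpE_one_of_unit S one_ne_zero (nu_one S) le_rfl h3
    · exfalso
      have h' := (key _ _).1 h
      simp only [Sum.elim_inl, Sum.elim_inr] at h'
      rw [heA, heB] at h'
      simp only [Fin.isValue, Matrix.of_apply, Matrix.cons_val', Matrix.cons_val_zero,
        Matrix.cons_val_one, Matrix.head_cons, Matrix.head_fin_const,
        Matrix.empty_val', Matrix.cons_val_fin_one, _root_.map_one] at h'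
      rw [hvalBσ c] at h'
      have h1 : S.inpE 1 ((1:E) * 1 + -valB c * valA c') := inpE_mono S hd1 h'
      have h2 : S.inpE 1 (valB c * valA c') :=
        inpE_mul_OE S (hvalB1 c) (hvalAO c')
      have h3 : S.inpE 1 (1:E) := by
        have := inpE_add S h1 h2
        simpa using this
      exact not_inpE_one_of_unit S one_ne_zero (nu_one S) le_rfl h3
    · have h' := (key _ _).1 h
      simp only [Sum.elim_inl, Sum.elim_inr] at h'
      rw [heB, heB] at h'
      simp only [Fin.isValue, Matrix.of_apply, Matrix.cons_val', Matrix.cons_val_zero,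
        Matrix.cons_val_one, Matrix.head_cons, Matrix.head_fin_const,
        Matrix.empty_val', Matrix.cons_val_fin_one, _root_.map_one] at h'
      rw [hvalBσ c] at h'
      have heq : (1:E) * valB c' + -valB c * 1
          = S.sqε * (S.ϖ * (∑ i : Fin (d-1), ((c' i : E)) * S.ϖ ^ (i:ℕ)
            - ∑ i : Fin (d-1), ((c i : E)) * S.ϖ ^ (i:ℕ))) := by
        show (1:E) * (S.sqε * (S.ϖ * _)) + -(S.sqε * (S.ϖ * _)) * 1 = _
        ring
      rw [heq, inpE_unit_mul S (sqε_ne_zero S) (nu_sqε S)] at h'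
      have hcast : (d:ℤ) = ((d-1:ℕ):ℤ) + 1 := by omega
      rw [hcast] at h'
      have h'' := inpE_div_ϖ S h'
      have := digits_unique S RF hRFmem hRFuniq (d-1) (fun i => (c' i : E))
        (fun i => (c i : E)) (fun i => (c' i).2) (fun i => (c i).2) h''
      have hcc : c = c' := by
        funext i
        exact Subtype.ext (congrFun this i).symm
      rw [hcc]
  -- surjectivity
  have hsurj : Function.Surjective Φ := by
    intro xq
    refine QuotientGroup.induction_on xq ?_
    intro g
    set m : Matrix (Fin 2) (Fin 2) E :=
      ((g : Matrix.GeneralLinearGroup (Fin 2) E) : Matrix (Fin 2) (Fin 2) E) with hm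
    have hgK : m ∈ S.Kset := (hKsub _).1 g.2
    obtain ⟨e1, e2, e3, e4⟩ := (inG_iff S m).1 hgK.1
    by_cases h00 : S.inpE 1 (m 0 0)
    · -- m 0 0 is not a unit, hence m 1 0 is
      have hdetu := det_unit S hgK.1
      have hdet2 : m.det = m 0 0 * m 1 1 - m 0 1 * m 1 0 := Matrix.det_fin_two m
      have h10u : m 1 0 ≠ 0 ∧ S.ν (m 1 0) = 0 := by
        refine unit_of_not_inpE S (hgK.2 1 0) fun hp => ?_
        have : S.inpE 1 m.det := by
          rw [hdet2]
          refine inpE_sub S (inpE_mul_OE S h00 (hgK.2 1 1)) ?_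
          rw [mul_comm]
          exact inpE_mul_OE S hp (hgK.2 0 1)
        exact not_inpE_one_of_unit S hdetu.1 hdetu.2 le_rfl this
      set s : E := m 0 0 / m 1 0 with hs
      have hσs : S.σ s = -s := by
        rw [hs, map_div₀]
        field_simp [σ_ne_zero S h10u.1, h10u.1]
        linear_combination e1
      have hs1 : S.inpE 1 s := inpE_div_unit S h00 h10u.1 h10u.2
      set f : E := s / (S.sqε * S.ϖ) with hf
      have hfσ : S.σ f = f := by
        rw [hf, map_div₀, _root_.map_mul, S.sqε_conj, S.ϖ_fixed, hσs, neg_mul,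
          neg_div_neg_eq]
      have hsf : s = S.sqε * S.ϖ * f := by
        rw [hf, mul_div_cancel₀]
        exact mul_ne_zero (sqε_ne_zero S) S.ϖ_ne_zero
      have hfO : S.inOE f := by
        rcases eq_or_ne s 0 with hs0 | hs0
        · rw [hf, hs0, zero_div]; exact inOE_zero S
        rcases hs1 with h | h
        · exact absurd h hs0
        refine Or.inr ?_
        rw [hf, div_eq_mul_inv, S.ν_mul hs0 (inv_ne_zero (mul_ne_zero
          (sqε_ne_zero S) S.ϖ_ne_zero)), nu_inv S (mul_ne_zero (sqε_ne_zero S)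
          S.ϖ_ne_zero), S.ν_mul (sqε_ne_zero S) S.ϖ_ne_zero, nu_sqε S, S.ν_ϖ]
        omega
      obtain ⟨cE, hcmem, hcd⟩ := digits_exist S RF hRFmem hRFuniq (d-1) f hfσ hfO
      refine ⟨Sum.inr (fun i => ⟨cE i, hcmem i⟩), ?_⟩
      show (QuotientGroup.mk (eB (fun i => ⟨cE i, hcmem i⟩)) :
        ↥Ksub ⧸ BKd.subgroupOf Ksub) = QuotientGroup.mk g
      rw [key, heB]
      simp only [Fin.isValue, Matrix.of_apply, Matrix.cons_val', Matrix.cons_val_zero,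
        Matrix.cons_val_one, Matrix.head_cons, Matrix.head_fin_const,
        Matrix.empty_val', Matrix.cons_val_fin_one, _root_.map_one]
      rw [hvalBσ]
      have hval : (1:E) * m 0 0 + -valB (fun i => ⟨cE i, hcmem i⟩) * m 1 0
          = m 1 0 * (S.sqε * (S.ϖ * (f - ∑ i : Fin (d-1), cE i * S.ϖ ^ (i:ℕ)))) := by
        have hm00 : m 0 0 = m 1 0 * s := by
          rw [hs, mul_div_cancel₀ _ h10u.1]
        rw [hm00, hsf]
        show _ + -(S.sqε * (S.ϖ * _)) * _ = _
        ring
      rw [hval, mul_comm]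
      refine inpE_mul_OE S ?_ (hgK.2 1 0)
      rw [inpE_unit_mul S (sqε_ne_zero S) (nu_sqε S)]
      have hcast : (d:ℤ) = ((d-1:ℕ):ℤ) + 1 := by omega
      rw [hcast]
      exact inpE_ϖ_mul S hcd
    · -- m 0 0 is a unit
      have h00u := unit_of_not_inpE S (hgK.2 0 0) h00
      set t : E := m 1 0 / m 0 0 with ht
      have hσt : S.σ t = -t := by
        rw [ht, map_div₀]
        field_simp [σ_ne_zero S h00u.1, h00u.1]
        linear_combination e1
      have htO : S.inOE t := inOE_div_unit S (hgK.2 1 0) h00u.1 h00u.2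
      set f : E := t / S.sqε with hf
      have hfσ : S.σ f = f := (trace_zero_decomp S hσt).1
      have htf : t = S.sqε * f := (trace_zero_decomp S hσt).2
      have hfO : S.inOE f := inOE_div_unit S htO (sqε_ne_zero S) (nu_sqε S)
      obtain ⟨cE, hcmem, hcd⟩ := digits_exist S RF hRFmem hRFuniq d f hfσ hfO
      refine ⟨Sum.inl (fun i => ⟨cE i, hcmem i⟩), ?_⟩
      show (QuotientGroup.mk (eA (fun i => ⟨cE i, hcmem i⟩)) :
        ↥Ksub ⧸ BKd.subgroupOf Ksub) = QuotientGroup.mk g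
      rw [key, heA]
      simp only [Fin.isValue, Matrix.of_apply, Matrix.cons_val', Matrix.cons_val_zero,
        Matrix.cons_val_one, Matrix.head_cons, Matrix.head_fin_const,
        Matrix.empty_val', Matrix.cons_val_fin_one, _root_.map_one]
      rw [hvalAσ]
      have hval : -valA (fun i => ⟨cE i, hcmem i⟩) * m 0 0 + (1:E) * m 1 0
          = m 0 0 * (S.sqε * (f - ∑ i : Fin d, cE i * S.ϖ ^ (i:ℕ))) := by
        have hm10 : m 1 0 = m 0 0 * t := by
          rw [ht, mul_div_cancel₀ _ h00u.1]
        rw [hm10, htf]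
        show -(S.sqε * _) * _ + _ = _
        ring
      rw [hval, mul_comm]
      refine inpE_mul_OE S ?_ (hgK.2 0 0)
      rw [inpE_unit_mul S (sqε_ne_zero S) (nu_sqε S)]
      exact hcd
  -- counting
  have hcard := Nat.card_eq_of_bijective Φ ⟨hinj, hsurj⟩
  show (BKd.subgroupOf Ksub).index = _
  rw [Subgroup.index_eq_card, ← hcard, Nat.card_eq_fintype_card,
    Fintype.card_sum, Fintype.card_fun, Fintype.card_fun, Fintype.card_coe,
    hRFcard, Fintype.card_fin, Fintype.card_fin]
  have hdd : d - 1 + 1 = d := Nat.succ_pred_eq_of_pos hd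
  calc S.q ^ d + S.q ^ (d-1) = S.q ^ (d - 1 + 1) + S.q ^ (d-1) := by rw [hdd]
    _ = (S.q + 1) * S.q ^ (d-1) := by rw [pow_succ]; ring
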